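/- Let a ∈ ℝ and let w ∈ ℂ be non-real with Re(w) < a < |w|, and suppose φ := |Arg(w)| ∈ (0, π/2]. Then τ_c(a,w) > 1 if and only if a > 0 and there exists θ ∈ (0, φ) such that θ·cot(θ − φ) = −a and |w|² < a² + θ². -/

import Mathlib

lemma cot_arctan_aux (y : ℝ) (hy : y ≠ 0) : Real.cot (Real.arctan y) = 1 / y := by
  have hc : Real.cos (Real.arctan y) ≠ 0 := (Real.cos_arctan_pos y).ne'
  have ht : Real.tan (Real.arctan y) = y := Real.tan_arctan y
  rw [Real.tan_eq_sin_div_cos] at ht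
  rw [Real.cot_eq_cos_div_sin]
  have hsin : Real.sin (Real.arctan y) = y * Real.cos (Real.arctan y) := by
    field_simp at ht; linarith [ht]
  rw [hsin]
  field_simp

/-- For real `a` and non-real `w` with `Re w < a < |w|` and `φ := |Arg w| ∈ (0, π/2]`,
the critical delay exceeds `1` iff `a > 0` and there is `θ ∈ (0, φ)` with
`θ cot(θ − φ) = −a` and `|w|² < a² + θ²`. -/
theorem critical_delay_gt_one_small_arg (a : ℝ) (w : ℂ) (hw : w.im ≠ 0)
    (h₁ : w.re < a) (h₂ : a < ‖w‖)
    (hφ : |w.arg| ∈ Set.Ioc 0 (Real.pi / 2)) :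
    (|w.arg| - Real.arccos (a / ‖w‖)) /
        Real.sqrt (‖w‖ ^ 2 - a ^ 2) > 1 ↔
      (a > 0 ∧ ∃ θ ∈ Set.Ioo (0 : ℝ) |w.arg|,
        θ * Real.cot (θ - |w.arg|) = -a ∧ ‖w‖ ^ 2 < a ^ 2 + θ ^ 2) := by
  obtain ⟨hφ0, hφle⟩ := hφ
  set r := ‖w‖ with hrdef
  set φ := |w.arg| with hφdef
  have hr : 0 < r := by
    have : w ≠ 0 := fun h => hw (by simp [h])
    exact norm_pos_iff.mpr this
  have hna : -r < a := by
    have h1 : -r ≤ w.re := by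
      have := Complex.abs_re_le_norm w
      have := neg_abs_le w.re
      linarith
    linarith
  have hd : 0 < r ^ 2 - a ^ 2 := by nlinarith
  set s := Real.sqrt (r ^ 2 - a ^ 2) with hsdef
  have hs : 0 < s := Real.sqrt_pos.2 hd
  have hs2 : s ^ 2 = r ^ 2 - a ^ 2 := Real.sq_sqrt hd.le
  set β := Real.arccos (a / r) with hβdef
  have hdiv1 : -1 ≤ a / r := by
    rw [neg_le, ← neg_div]
    exact (div_le_one hr).2 (by linarith)
  have hdiv2 : a / r ≤ 1 := (div_le_one hr).2 h₂.le
  have hcos : Real.cos β = a / r := Real.cos_arccos hdiv1 hdiv2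
  have hβ0 : 0 ≤ β := Real.arccos_nonneg _
  have hβπ : β ≤ Real.pi := Real.arccos_le_pi _
  have hsinβ : Real.sin β = s / r := by
    rw [hβdef, Real.sin_arccos]
    have hsq : (1 : ℝ) - (a / r) ^ 2 = (s / r) ^ 2 := by
      rw [div_pow, div_pow, hs2]
      field_simp
    rw [hsq, Real.sqrt_sq (by positivity)]
  -- LHS ⟺ s + β < φ
  have hiff : (φ - β) / s > 1 ↔ s + β < φ := by
    rw [gt_iff_lt, lt_div_iff₀ hs]
    constructor <;> intro h <;> linarith
  rw [hiff]
  -- β = arctan (s/a) when 0 < a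
  have harctan : 0 < a → Real.arctan (s / a) = β := by
    intro ha
    have hcosβ : 0 < Real.cos β := by rw [hcos]; positivity
    have hβlt : β < Real.pi / 2 := by
      by_contra h
      push_neg at h
      have := Real.cos_nonpos_of_pi_div_two_le_of_le h (by linarith [Real.pi_pos])
      linarith
    have htan : Real.tan β = s / a := by
      rw [Real.tan_eq_sin_div_cos, hsinβ, hcos]
      field_simp
    rw [← htan, Real.arctan_tan (by linarith) hβlt]
  constructor
  · -- forward
    intro h
    have hβφ : β < φ := by linarith
    have hcosβ : 0 < Real.cos β := by
      have := Real.cos_pos_of_mem_Ioo (show β ∈ Set.Ioo (-(Real.pi/2)) (Real.pi/2) from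
        ⟨by linarith [Real.pi_pos], by linarith⟩)
      exact this
    have ha : 0 < a := by
      rw [hcos] at hcosβ
      have : 0 < a / r * r := mul_pos hcosβ hr
      rwa [div_mul_cancel₀ a hr.ne'] at this
    refine ⟨ha, ?_⟩
    -- IVT for f t = t + arctan (t/a)
    set f : ℝ → ℝ := fun t => t + Real.arctan (t / a) with hfdef
    have hfc : Continuous f := by
      apply Continuous.add continuous_id
      exact Real.continuous_arctan.comp (continuous_id.div_const a)
    have hfs : f s < φ := by
      simp only [hfdef]
      rw [harctan ha]
      linarith
    have hfφ : φ < f φ := by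
      simp only [hfdef]
      have : 0 < Real.arctan (φ / a) := by
        have := Real.arctan_strictMono (show (0:ℝ) < φ / a by positivity)
        rwa [Real.arctan_zero] at this
      linarith
    have hsφ : s ≤ φ := by linarith
    have hmem : φ ∈ Set.Ioo (f s) (f φ) := ⟨hfs, hfφ⟩
    obtain ⟨θ, hθmem, hθeq⟩ := intermediate_value_Ioo hsφ hfc.continuousOn hmem
    obtain ⟨hθs, hθφ⟩ := hθmem
    have hθ0 : 0 < θ := lt_trans hs hθs
    refine ⟨θ, ⟨hθ0, hθφ⟩, ?_, ?_⟩
    · -- equation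
      have heq : θ - φ = -(Real.arctan (θ / a)) := by
        simp only [hfdef] at hθeq
        linarith
      rw [heq, Real.cot_eq_cos_div_sin, Real.cos_neg, Real.sin_neg,
        div_neg, ← Real.cot_eq_cos_div_sin, cot_arctan_aux _ (by positivity)]
      field_simp
    · nlinarith
  · -- reverse
    rintro ⟨ha, θ, ⟨hθ0, hθφ⟩, heq, hlt⟩
    have hφθ1 : 0 < φ - θ := by linarith
    have hφθ2 : φ - θ < Real.pi / 2 := by linarith
    have hsin : 0 < Real.sin (φ - θ) := Real.sin_pos_of_pos_of_lt_pi hφθ1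
      (by linarith [Real.pi_pos])
    have hcosφθ : 0 < Real.cos (φ - θ) := Real.cos_pos_of_mem_Ioo
      ⟨by linarith [Real.pi_pos], hφθ2⟩
    -- from heq: θ cos(φ-θ) = a sin(φ-θ)
    have hkey : θ * Real.cos (φ - θ) = a * Real.sin (φ - θ) := by
      rw [Real.cot_eq_cos_div_sin] at heq
      have h1 : θ - φ = -(φ - θ) := by ring
      rw [h1, Real.cos_neg, Real.sin_neg, div_neg] at heq
      field_simp at heq
      linarith
    have htan : Real.tan (φ - θ) = θ / a := by
      rw [Real.tan_eq_sin_div_cos, eq_div_iff ha.ne']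
      field_simp
      nlinarith [hkey]
    have harc : φ - θ = Real.arctan (θ / a) := by
      rw [← htan, Real.arctan_tan (by linarith [Real.pi_pos]) hφθ2]
    have hθs : s < θ := by
      have hsq : s ^ 2 < θ ^ 2 := by rw [hs2]; linarith
      exact lt_of_pow_lt_pow_left₀ 2 hθ0.le hsq
    have hdivlt : s / a < θ / a := by gcongr
    have hmono : Real.arctan (s / a) < Real.arctan (θ / a) :=
      Real.arctan_strictMono hdivlt
    rw [harctan ha] at hmono
    rw [← harc] at hmono
    linarith
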